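/- Finite-mirroring valuation (Theorem 2), exhausted case: once the holder has performed all M allowed mirrorings, the remaining value satisfies the pure Gaussian backward recursion (no maximization) and equals q*(τ, M) = ν( x*_{T-τ} + (σ²/2 + (-1)^M (α - σ²/2))·τ, σ²τ ) for τ = nε; in particular this holds for arbitrary (not necessarily monotone) Gaussian-integrable payoffs. -/

import Mathlib

open MeasureTheory

/-- Gaussian smoothing of the payoff `f` in log-coordinates, extended to variance `0`. -/
noncomputable def nu (f : ℝ → ℝ) (z s : ℝ) : ℝ :=
  if s = 0 then f (Real.exp z)
  else (Real.sqrt (2 * Real.pi * s))⁻¹ *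
    ∫ x : ℝ, f (Real.exp x) * Real.exp (-(x - z + s/2)^2 / (2*s))

-- Gaussian integral with shift
lemma gauss_int (c w : ℝ) (hw : 0 < w) :
    ∫ u : ℝ, Real.exp (-(u - c)^2 / (2*w)) = Real.sqrt (2*Real.pi*w) := by
  have h0 : ∀ u : ℝ, Real.exp (-(u - c)^2 / (2*w)) =
      (fun t : ℝ => Real.exp (-(2*w)⁻¹ * t^2)) (u - c) := by
    intro u; simp only; congr 1; field_simp
  simp_rw [h0]
  rw [integral_sub_right_eq_self (fun t : ℝ => Real.exp (-(2*w)⁻¹ * t^2)) c,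
    integral_gaussian]
  congr 1
  field_simp [Real.pi_ne_zero]

lemma gauss_integrable (c w : ℝ) (hw : 0 < w) :
    Integrable (fun u : ℝ => Real.exp (-(u - c)^2 / (2*w))) := by
  have h := (integrable_exp_neg_mul_sq (show (0:ℝ) < (2*w)⁻¹ by positivity)).comp_sub_right c
  refine h.congr (Filter.Eventually.of_forall fun u => ?_)
  simp only
  congr 1; field_simp

lemma complete_sq (A b s v : ℝ) (hs : 0 < s) (hv : 0 < v) (u : ℝ) :
    Real.exp (-(A - u)^2/(2*s)) * Real.exp (-(u - b)^2/(2*v)) =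
    Real.exp (-(A - b)^2/(2*(s+v))) *
      Real.exp (-(u - (v*A + s*b)/(s+v))^2/(2*(s*v/(s+v)))) := by
  rw [← Real.exp_add, ← Real.exp_add]
  congr 1
  have hsv : s + v ≠ 0 := by positivity
  field_simp
  ring

lemma gauss_conv (A b s v : ℝ) (hs : 0 < s) (hv : 0 < v) :
    ∫ u : ℝ, Real.exp (-(A - u)^2/(2*s)) * Real.exp (-(u - b)^2/(2*v))
    = Real.sqrt (2*Real.pi*(s*v/(s+v))) * Real.exp (-(A - b)^2/(2*(s+v))) := by
  have hw : 0 < s*v/(s+v) := by positivity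
  simp_rw [complete_sq A b s v hs hv]
  rw [integral_const_mul, gauss_int _ _ hw]
  ring

noncomputable def Nu (g : ℝ → ℝ) (z s : ℝ) : ℝ :=
  if s = 0 then g z
  else (Real.sqrt (2 * Real.pi * s))⁻¹ *
    ∫ x : ℝ, g x * Real.exp (-(x - z + s/2)^2 / (2*s))

lemma g_aesm (g : ℝ → ℝ)
    (hg : Integrable (fun x : ℝ => g x * Real.exp (-(x - 0 + 1/2)^2 / (2*1)))) :
    AEStronglyMeasurable g (volume : Measure ℝ) := by
  have h2 : AEStronglyMeasurable
      (fun x : ℝ => (Real.exp (-(x - 0 + 1/2)^2 / (2*1)))⁻¹) volume :=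
    (Continuous.aestronglyMeasurable (by
      refine Continuous.inv₀ (by continuity) fun x => Real.exp_ne_zero _))
  refine (hg.aestronglyMeasurable.mul h2).congr ?_
  filter_upwards with x
  simp only [Pi.mul_apply]
  rw [mul_assoc, mul_inv_cancel₀ (Real.exp_ne_zero _), mul_one]

lemma step0 (g : ℝ → ℝ) (φ m z v : ℝ) (hφ : φ = 1 ∨ φ = -1) (hv : 0 < v) :
    ∫ u : ℝ, g (z + φ*u) * Real.exp (-(u - m)^2/(2*v))
    = ∫ x : ℝ, g x * Real.exp (-(x - (z + φ*m + v/2) + v/2)^2/(2*v)) := by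
  set F : ℝ → ℝ := fun x => g x * Real.exp (-(x - (z + φ*m + v/2) + v/2)^2/(2*v)) with hF
  rcases hφ with h | h <;> subst h
  · have h1 : ∀ u : ℝ, g (z + 1*u) * Real.exp (-(u - m)^2/(2*v)) = F (z + u) := by
      intro u; rw [hF]; simp only [one_mul]; congr 2; ring
    simp_rw [h1]
    exact integral_add_left_eq_self F z
  · have h1 : ∀ u : ℝ, g (z + (-1)*u) * Real.exp (-(u - m)^2/(2*v))
        = (fun t => F (z + t)) (-u) := by
      intro u; rw [hF]; simp only [neg_one_mul]; congr 2; ring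
    simp_rw [h1]
    rw [integral_neg_eq_self (fun t => F (z + t)) volume]
    exact integral_add_left_eq_self F z

set_option maxHeartbeats 2000000 in
lemma key (g : ℝ → ℝ)
    (hg : ∀ z s : ℝ, 0 < s →
      Integrable (fun x : ℝ => g x * Real.exp (-(x - z + s/2)^2 / (2*s))))
    (φ m z s v : ℝ) (hφ : φ = 1 ∨ φ = -1) (hs : 0 ≤ s) (hv : 0 < v) :
    (Real.sqrt (2*Real.pi*v))⁻¹ *
      ∫ u : ℝ, Nu g (z + φ*u) s * Real.exp (-(u - m)^2 / (2*v))
    = Nu g (z + φ*m + v/2) (s+v) := by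
  rcases eq_or_lt_of_le hs with h0 | hspos
  · -- s = 0 : single-step case
    subst h0
    simp only [Nu, if_pos rfl, zero_add, if_neg hv.ne', if_true, eq_self_iff_true]
    rw [step0 g φ m z v hφ hv]
  · -- s > 0 : genuine convolution
    have hsv : (0:ℝ) < s + v := by linarith
    set A : ℝ → ℝ := fun x => φ*(x - z + s/2) with hA
    set Z : ℝ := z + φ*m + v/2 with hZ
    have hφ2 : φ^2 = 1 := by rcases hφ with h | h <;> subst h <;> norm_num
    have hexp1 : ∀ u x : ℝ, (x - (z + φ*u) + s/2)^2 = (A x - u)^2 := by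
      intro u x
      rcases hφ with h | h <;> subst h <;> simp only [hA] <;> ring
    have hexp2 : ∀ x : ℝ, (A x - m)^2 = (x - Z + (s+v)/2)^2 := by
      intro x
      rcases hφ with h | h <;> subst h <;> simp only [hA, hZ] <;> ring
    -- the product integrand and its integrability
    set F : ℝ × ℝ → ℝ := fun p =>
      g p.2 * Real.exp (-(A p.2 - p.1)^2/(2*s)) * Real.exp (-(p.1 - m)^2/(2*v)) with hFdef
    have hw : (0:ℝ) < s*v/(s+v) := by positivity
    have hFmeas : AEStronglyMeasurable F (volume.prod volume) := by
      have hgm : AEStronglyMeasurable g volume := g_aesm g (hg 0 1 one_pos)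
      have hcont : Continuous (fun p : ℝ × ℝ =>
          Real.exp (-(A p.2 - p.1)^2/(2*s)) * Real.exp (-(p.1 - m)^2/(2*v))) := by
        simp only [hA]; continuity
      have := (hgm.comp_snd (μ := (volume : Measure ℝ)) (ν := (volume : Measure ℝ))).mul
        (hcont.aestronglyMeasurable (μ := (volume : Measure ℝ).prod volume))
      refine this.congr (Filter.Eventually.of_forall fun p => ?_)
      simp only [hFdef, Pi.mul_apply]; ring
    have hFint : Integrable F (volume.prod volume) := by
      rw [integrable_prod_iff' hFmeas]
      constructor
      · refine Filter.Eventually.of_forall fun x => ?_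
        have : Integrable (fun u : ℝ =>
            (g x * Real.exp (-(A x - m)^2/(2*(s+v)))) *
              Real.exp (-(u - (v*(A x) + s*m)/(s+v))^2/(2*(s*v/(s+v))))) volume :=
          (gauss_integrable _ _ hw).const_mul _
        refine this.congr (Filter.Eventually.of_forall fun u => ?_)
        simp only [hFdef]
        rw [mul_assoc, mul_assoc, complete_sq (A x) m s v hspos hv u]
      · have hbase := (hg Z (s+v) hsv).norm
        have : Integrable (fun x : ℝ =>
            ‖g x * Real.exp (-(x - Z + (s+v)/2)^2/(2*(s+v)))‖ *
              Real.sqrt (2*Real.pi*(s*v/(s+v)))) volume := hbase.mul_const _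
        refine this.congr (Filter.Eventually.of_forall fun x => ?_)
        have hcalc : ∀ u : ℝ, ‖F (u, x)‖ =
            ‖g x‖ * (Real.exp (-(A x - u)^2/(2*s)) * Real.exp (-(u - m)^2/(2*v))) := by
          intro u
          simp only [hFdef, norm_mul, Real.norm_eq_abs, Real.abs_exp, mul_assoc]
        simp_rw [hcalc]
        rw [integral_const_mul, gauss_conv (A x) m s v hspos hv, hexp2 x]
        rw [norm_mul, Real.norm_eq_abs (Real.exp _), Real.abs_exp]
        ring
    -- now compute
    simp only [Nu, if_neg hspos.ne', if_neg hsv.ne']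
    simp_rw [hexp1]
    have step1 : ∀ u : ℝ,
        ((Real.sqrt (2*Real.pi*s))⁻¹ * ∫ x : ℝ, g x * Real.exp (-(A x - u)^2/(2*s))) *
          Real.exp (-(u - m)^2/(2*v))
        = (Real.sqrt (2*Real.pi*s))⁻¹ *
            ∫ x : ℝ, g x * Real.exp (-(A x - u)^2/(2*s)) * Real.exp (-(u - m)^2/(2*v)) := by
      intro u
      rw [mul_assoc, ← integral_mul_const]
    simp_rw [step1]
    rw [integral_const_mul, integral_integral_swap (f := fun u x =>
      g x * Real.exp (-(A x - u)^2/(2*s)) * Real.exp (-(u - m)^2/(2*v))) hFint]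
    have step2 : ∀ x : ℝ,
        (∫ u : ℝ, g x * Real.exp (-(A x - u)^2/(2*s)) * Real.exp (-(u - m)^2/(2*v)))
        = Real.sqrt (2*Real.pi*(s*v/(s+v))) *
            (g x * Real.exp (-(x - Z + (s+v)/2)^2/(2*(s+v)))) := by
      intro x
      simp_rw [mul_assoc]
      rw [integral_const_mul, gauss_conv (A x) m s v hspos hv, hexp2 x]
      ring
    simp_rw [step2]
    rw [integral_const_mul]
    have hconst : (Real.sqrt (2*Real.pi*v))⁻¹ * ((Real.sqrt (2*Real.pi*s))⁻¹ *
        Real.sqrt (2*Real.pi*(s*v/(s+v)))) = (Real.sqrt (2*Real.pi*(s+v)))⁻¹ := by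
      have h1 : (0:ℝ) < Real.sqrt (2*Real.pi*v) := Real.sqrt_pos.mpr (by positivity)
      have h2 : (0:ℝ) < Real.sqrt (2*Real.pi*s) := Real.sqrt_pos.mpr (by positivity)
      have h3 : (0:ℝ) < Real.sqrt (2*Real.pi*(s+v)) := Real.sqrt_pos.mpr (by positivity)
      have hmain : Real.sqrt (2*Real.pi*(s*v/(s+v))) * Real.sqrt (2*Real.pi*(s+v))
          = Real.sqrt (2*Real.pi*v) * Real.sqrt (2*Real.pi*s) := by
        rw [← Real.sqrt_mul (by positivity), ← Real.sqrt_mul (by positivity)]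
        congr 1
        field_simp
      have hc : Real.sqrt (2*Real.pi*(s*v/(s+v)))
          = (Real.sqrt (2*Real.pi*v) * Real.sqrt (2*Real.pi*s)) / Real.sqrt (2*Real.pi*(s+v)) := by
        rw [eq_div_iff h3.ne']; exact hmain
      rw [hc]
      field_simp
    rw [← hconst]
    ring


/-- Theorem 2, exhausted case: after all `M` allowed mirrorings have been performed the
value satisfies the pure Gaussian backward recursion (no maximization) and equals
`ν(x* + (σ²/2 + (-1)^M(α - σ²/2))τ, σ²τ)`, for an arbitrary (not necessarily monotone)
Gaussian-integrable payoff. -/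
theorem exhausted_mirrorings_value (f : ℝ → ℝ)
    (hint : ∀ z s : ℝ, 0 < s →
      Integrable (fun x : ℝ => f (Real.exp x) * Real.exp (-(x - z + s/2)^2 / (2*s))))
    (σ r δ ε α : ℝ) (hσ : 0 < σ) (hε : 0 < ε) (hα : α = r - δ)
    (M : ℕ) (Q : ℕ → ℝ → ℝ)
    (hQ0 : ∀ y, Q 0 y = f (Real.exp y))
    (hQrec : ∀ n y, Q (n+1) y =
      (σ * Real.sqrt (2 * Real.pi * ε))⁻¹ *
        ∫ u : ℝ, Q n (y + (-1:ℝ)^M * u) * Real.exp (-(u - α*ε + σ^2*ε/2)^2 / (2*σ^2*ε))) :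
    ∀ n : ℕ, ∀ y : ℝ,
      Q n y = nu f (y + (σ^2/2 + (-1:ℝ)^M * (α - σ^2/2)) * (n*ε)) (σ^2*(n*ε)) := by
  have hφ : (-1:ℝ)^M = 1 ∨ (-1:ℝ)^M = -1 := by
    rcases Nat.even_or_odd M with h | h
    · left; exact h.neg_one_pow
    · right; exact h.neg_one_pow
  have hnu : ∀ z s : ℝ, nu f z s = Nu (fun x => f (Real.exp x)) z s := fun z s => rfl
  intro n
  induction n with
  | zero =>
    intro y
    simp [hQ0, nu]
  | succ n ih =>
    intro y
    rw [hQrec n y]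
    have hv : (0:ℝ) < σ^2*ε := by positivity
    have hs : (0:ℝ) ≤ σ^2*((n:ℝ)*ε) := by positivity
    have h1 : ∀ u : ℝ, Q n (y + (-1:ℝ)^M * u)
        = Nu (fun x => f (Real.exp x))
            ((y + (σ^2/2 + (-1:ℝ)^M * (α - σ^2/2)) * ((n:ℝ)*ε)) + (-1:ℝ)^M * u)
            (σ^2*((n:ℝ)*ε)) := by
      intro u
      rw [ih (y + (-1:ℝ)^M * u), hnu]
      congr 1
      ring
    simp_rw [h1]
    have h2 : ∀ u : ℝ, -(u - α*ε + σ^2*ε/2)^2 / (2*σ^2*ε)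
        = -(u - (α*ε - σ^2*ε/2))^2 / (2*(σ^2*ε)) := by
      intro u; ring_nf
    simp_rw [h2]
    have h3 : (σ * Real.sqrt (2*Real.pi*ε))⁻¹ = (Real.sqrt (2*Real.pi*(σ^2*ε)))⁻¹ := by
      rw [show 2*Real.pi*(σ^2*ε) = σ^2 * (2*Real.pi*ε) by ring,
        Real.sqrt_mul (sq_nonneg σ), Real.sqrt_sq hσ.le]
    rw [h3]
    rw [key (fun x => f (Real.exp x)) hint ((-1:ℝ)^M) (α*ε - σ^2*ε/2)
      (y + (σ^2/2 + (-1:ℝ)^M * (α - σ^2/2)) * ((n:ℝ)*ε)) (σ^2*((n:ℝ)*ε)) (σ^2*ε) hφ hs hv]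
    rw [hnu]
    congr 1
    · push_cast; ring
    · push_cast; ring
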